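/- Let H be a real Hilbert space, let V ⊆ W be complete subspaces of H, let u ∈ H, and let u_V and u_W denote the orthogonal projections of u onto V and W. Let I : W → V be a linear map, and let C ≥ 0 and η ≥ 0 be real numbers such that: (i) ‖w − I(w)‖ ≤ C·‖w‖ for all w ∈ W; and (ii) ⟨u − u_V, w − I(w)⟩ ≤ η·‖w − I(w)‖ for all w ∈ W. Then ‖u_W − u_V‖ ≤ C·η. (This is the Hilbert-space skeleton of the paper's p-robust discrete reliability lemma.) -/

import Mathlib

open scoped RealInnerProductSpace

/-- Hilbert-space skeleton of the p-robust discrete reliability lemma. -/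
theorem stmt_4 {H : Type*} [NormedAddCommGroup H] [InnerProductSpace ℝ H]
    (V W : Submodule ℝ H) [CompleteSpace V] [CompleteSpace W] (hVW : V ≤ W)
    (u : H) (I : W →ₗ[ℝ] V) (C η : ℝ) (hC : 0 ≤ C) (hη : 0 ≤ η)
    (hstab : ∀ w : W, ‖(w : H) - (I w : H)‖ ≤ C * ‖(w : H)‖)
    (hres : ∀ w : W, ⟪u - (Submodule.orthogonalProjection V u : H), (w : H) - (I w : H)⟫
      ≤ η * ‖(w : H) - (I w : H)‖) :
    ‖(Submodule.orthogonalProjection W u : H) - (Submodule.orthogonalProjection V u : H)‖ ≤ C * η := by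
  set uV : H := (Submodule.orthogonalProjection V u : H) with huV
  set uW : H := (Submodule.orthogonalProjection W u : H) with huW
  have hmem : uW - uV ∈ W := W.sub_mem (Submodule.orthogonalProjection W u).2 (hVW (Submodule.orthogonalProjection V u).2)
  set w : W := ⟨uW - uV, hmem⟩ with hw
  have h1 : ⟪u - uW, (w : H)⟫ = 0 := Submodule.starProjection_inner_eq_zero (K := W) u _ hmem
  have h2 : ⟪u - uV, (I w : H)⟫ = 0 := Submodule.starProjection_inner_eq_zero (K := V) u _ (I w).2
  have key : ‖(w : H)‖ ^ 2 = ⟪u - uV, (w : H) - (I w : H)⟫ := by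
    have : ⟪u - uV, (w : H)⟫ = ⟪(w : H), (w : H)⟫ := by
      have : u - uV = (u - uW) + (w : H) := by simp only [hw]; abel
      rw [this, inner_add_left, h1, zero_add]
    rw [inner_sub_right, h2, sub_zero, this, real_inner_self_eq_norm_sq]
  have hb : ‖(w : H)‖ ^ 2 ≤ η * (C * ‖(w : H)‖) := by
    rw [key]
    calc ⟪u - uV, (w : H) - (I w : H)⟫ ≤ η * ‖(w : H) - (I w : H)‖ := hres w
      _ ≤ η * (C * ‖(w : H)‖) := by
          exact mul_le_mul_of_nonneg_left (hstab w) hη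
  have : ‖(w : H)‖ ≤ C * η := by
    rcases eq_or_lt_of_le (norm_nonneg (w : H)) with h0 | h0
    · rw [← h0]; positivity
    · nlinarith [hb, h0]
  simpa [hw] using this
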